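/- Let f, g ∈ ℚ[u,v] be polynomials such that u³ − 27v² divides 3u²g + 54vf in ℚ[u,v]. Then the pair (f, g) is a ℚ[u,v]-linear combination of the pairs (−3v, 2u) and (3u², −54v); that is, there exist a, b ∈ ℚ[u,v] with f = −3v·a + 3u²·b and g = 2u·a − 54v·b. -/

import Mathlib

open MvPolynomial

noncomputable def u : MvPolynomial (Fin 2) ℚ := X 0
noncomputable def v : MvPolynomial (Fin 2) ℚ := X 1

lemma u_prime : Prime u := by
  have hp : Prime ((MvPolynomial.finSuccEquiv ℚ 1) u) := by
    rw [u, MvPolynomial.finSuccEquiv_X_zero]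
    exact Polynomial.prime_X
  exact (MulEquiv.prime_iff (MvPolynomial.finSuccEquiv ℚ 1).toRingEquiv.toMulEquiv).mp hp

lemma u_not_dvd_54v : ¬ u ∣ (54 * v : MvPolynomial (Fin 2) ℚ) := by
  intro hd
  have := map_dvd (eval fun i : Fin 2 => if i = 0 then (0:ℚ) else 1) hd
  simp [u, v] at this

lemma h6 : (6 : MvPolynomial (Fin 2) ℚ) * C (1/6 : ℚ) = 1 := by
  rw [(map_ofNat (C : ℚ →+* MvPolynomial (Fin 2) ℚ) 6).symm, ← C_mul]
  norm_num

lemma h3 : (3 : MvPolynomial (Fin 2) ℚ) * C (1/3 : ℚ) = 1 := by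
  rw [(map_ofNat (C : ℚ →+* MvPolynomial (Fin 2) ℚ) 3).symm, ← C_mul]
  norm_num

/-- If `u³ − 27v²` divides `3u²g + 54vf` in `ℚ[u,v]`, then `(f, g)` is a
`ℚ[u,v]`-linear combination of `(−3v, 2u)` and `(3u², −54v)`. -/
theorem stmt_0 (f g : MvPolynomial (Fin 2) ℚ)
    (h : (u ^ 3 - 27 * v ^ 2) ∣ (3 * u ^ 2 * g + 54 * v * f)) :
    ∃ a b : MvPolynomial (Fin 2) ℚ,
      f = -3 * v * a + 3 * u ^ 2 * b ∧ g = 2 * u * a - 54 * v * b := by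
  obtain ⟨q, hq⟩ := h
  set a : MvPolynomial (Fin 2) ℚ := C (1/6 : ℚ) * q with ha
  have hq6 : 3 * u ^ 2 * g + 54 * v * f = (u ^ 3 - 27 * v ^ 2) * (6 * a) := by
    rw [hq, ha]
    linear_combination (-((u ^ 3 - 27 * v ^ 2) * q)) * h6
  have key : 3 * (u ^ 2 * (2 * u * a - g)) = 54 * v * (f + 3 * v * a) := by
    linear_combination -hq6
  have hdvd : u ^ 2 ∣ (f + 3 * v * a) :=
    u_prime.pow_dvd_of_dvd_mul_left 2 u_not_dvd_54v
      ⟨3 * (2 * u * a - g), by linear_combination -key⟩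
  obtain ⟨b', hb'⟩ := hdvd
  refine ⟨a, C (1/3 : ℚ) * b', ?_, ?_⟩
  · linear_combination hb' - (u ^ 2 * b') * h3
  · have hu2 : (u ^ 2 : MvPolynomial (Fin 2) ℚ) ≠ 0 := pow_ne_zero 2 (X_ne_zero 0)
    have heq : u ^ 2 * (3 * (2 * u * a - g)) = u ^ 2 * (3 * (54 * v * (C (1/3 : ℚ) * b'))) := by
      rw [hb'] at key
      linear_combination key - (54 * v * u ^ 2 * b') * h3
    have h2 := mul_left_cancel₀ hu2 heq
    have h33 : (3 : MvPolynomial (Fin 2) ℚ) ≠ 0 := by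
      intro hc
      have h0 := congrArg (eval fun _ : Fin 2 => (0:ℚ)) hc
      rw [map_ofNat, map_zero] at h0
      norm_num at h0
    have := mul_left_cancel₀ h33 h2
    linear_combination -this
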